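/- In the tree-recognition system, if G is an input graph and G ⇒*_𝓡 H, then H has exactly one root node; in particular H is non-empty, so the empty graph is not derivable from any input graph. -/

import Mathlib

/-! # Rooted graph transformation with relabelling -/

/-- A graph over a label alphabet `(LV, LE)`: finite vertex and edge sets, total
source/target functions, a partial node-labelling function `l`, a total
edge-labelling function `m`, and a partial rootedness function `p`
(`some true` = root node, `some false` = non-root, `none` = undefined). -/
structure RGraph (LV LE : Type) : Type 1 where
  V : Type
  E : Type
  finV : Finite V
  finE : Finite E
  s : E → V
  t : E → V
  l : V → Option LV
  m : E → LE
  p : V → Option Bool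

namespace RGraph

variable {LV LE : Type}

def IsTotallyLabelled (G : RGraph LV LE) : Prop := ∀ v, (G.l v).isSome
def IsTotallyRooted (G : RGraph LV LE) : Prop := ∀ v, (G.p v).isSome
/-- totally labelled, totally rooted graph -/
def IsTLRG (G : RGraph LV LE) : Prop := G.IsTotallyLabelled ∧ G.IsTotallyRooted

/-- The number of root nodes `|p⁻¹({1})|`. -/
noncomputable def rootCount (G : RGraph LV LE) : ℕ := Nat.card {v : G.V // G.p v = some true}

/-- The degree of a node. -/
noncomputable def degree (G : RGraph LV LE) (v : G.V) : ℕ :=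
  Nat.card {e : G.E // G.s e = v} + Nat.card {e : G.E // G.t e = v}

end RGraph

/-- Graph morphisms preserve sources, targets, edge labels, and node labels and
rootedness wherever these are defined. -/
structure Morphism {LV LE : Type} (G H : RGraph LV LE) : Type where
  fV : G.V → H.V
  fE : G.E → H.E
  src : ∀ e, fV (G.s e) = H.s (fE e)
  tgt : ∀ e, fV (G.t e) = H.t (fE e)
  edgeLabel : ∀ e, G.m e = H.m (fE e)
  nodeLabel : ∀ v x, G.l v = some x → H.l (fV v) = some x
  rootedness : ∀ v b, G.p v = some b → H.p (fV v) = some b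

namespace Morphism

variable {LV LE : Type} {G H K : RGraph LV LE}

def Injective (g : Morphism G H) : Prop := Function.Injective g.fV ∧ Function.Injective g.fE

/-- identity morphism -/
def ident (G : RGraph LV LE) : Morphism G G where
  fV := id
  fE := id
  src := fun _ => rfl
  tgt := fun _ => rfl
  edgeLabel := fun _ => rfl
  nodeLabel := fun _ _ h => h
  rootedness := fun _ _ h => h

/-- composition of morphisms -/
def comp (g : Morphism G H) (h : Morphism H K) : Morphism G K where
  fV := h.fV ∘ g.fV
  fE := h.fE ∘ g.fE
  src := fun e => by simp [Function.comp, g.src e, h.src (g.fE e)]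
  tgt := fun e => by simp [Function.comp, g.tgt e, h.tgt (g.fE e)]
  edgeLabel := fun e => by simp [Function.comp, ← h.edgeLabel (g.fE e), g.edgeLabel e]
  nodeLabel := fun v x hx => h.nodeLabel _ _ (g.nodeLabel v x hx)
  rootedness := fun v b hb => h.rootedness _ _ (g.rootedness v b hb)

end Morphism

/-- An isomorphism of graphs: a morphism with a two-sided inverse morphism. -/
structure Iso {LV LE : Type} (G H : RGraph LV LE) : Type where
  toMor : Morphism G H
  invMor : Morphism H G
  leftV : ∀ v, invMor.fV (toMor.fV v) = v
  leftE : ∀ e, invMor.fE (toMor.fE e) = e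
  rightV : ∀ v, toMor.fV (invMor.fV v) = v
  rightE : ∀ e, toMor.fE (invMor.fE e) = e

/-- A rule `⟨L ← K → R⟩`: graphs `L`, `K`, `R` together with inclusion
(injective) morphisms `K ↪ L` and `K ↪ R`.  (In the rooted relabelling setting
`L` and `R` are additionally required to be TLRGs; this requirement is stated
as a hypothesis where needed.) -/
structure Rule (LV LE : Type) : Type 1 where
  L : RGraph LV LE
  K : RGraph LV LE
  R : RGraph LV LE
  incL : Morphism K L
  incR : Morphism K R
  injL : incL.Injective
  injR : incR.Injective

namespace Rule

variable {LV LE : Type} (r : Rule LV LE) (G : RGraph LV LE)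

/-- The inverse rule `r⁻¹ = ⟨R ← K → L⟩`. -/
def inv (r : Rule LV LE) : Rule LV LE where
  L := r.R
  K := r.K
  R := r.L
  incL := r.incR
  incR := r.incL
  injL := r.injR
  injR := r.injL

/-- The dangling condition: no edge of `G ∖ g(L)` is incident to a node of `g(L ∖ K)`. -/
def Dangling (g : Morphism r.L G) : Prop :=
  ∀ e : G.E, (∀ e' : r.L.E, g.fE e' ≠ e) →
    ∀ v : r.L.V, (∀ k : r.K.V, r.incL.fV k ≠ v) →
      G.s e ≠ g.fV v ∧ G.t e ≠ g.fV v

/-- The match `g` is applicable: it is injective and satisfies the dangling condition. -/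
def Applicable (g : Morphism r.L G) : Prop := g.Injective ∧ r.Dangling G g

/-- the nodes `g(L ∖ K)` deleted by applying `r` via `g` -/
def DelV (g : Morphism r.L G) : Set G.V :=
  {x | ∃ v : r.L.V, (∀ k : r.K.V, r.incL.fV k ≠ v) ∧ g.fV v = x}

/-- the edges `g(L ∖ K)` deleted by applying `r` via `g` -/
def DelE (g : Morphism r.L G) : Set G.E :=
  {x | ∃ e : r.L.E, (∀ k : r.K.E, r.incL.fE k ≠ e) ∧ g.fE e = x}

theorem kept_incL {g : Morphism r.L G} (hinj : g.Injective) (k : r.K.V) :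
    g.fV (r.incL.fV k) ∉ r.DelV G g := by
  rintro ⟨v, hv, heq⟩
  exact hv k (hinj.1 heq).symm

theorem kept_src {g : Morphism r.L G} (h : r.Applicable G g) {e : G.E}
    (he : e ∉ r.DelE G g) : G.s e ∉ r.DelV G g := by
  rintro ⟨v, hv, heq⟩
  by_cases hc : ∃ e', g.fE e' = e
  · obtain ⟨e', rfl⟩ := hc
    by_cases hk : ∃ k, r.incL.fE k = e'
    · obtain ⟨k, rfl⟩ := hk
      have h1 : g.fV (r.L.s (r.incL.fE k)) = G.s (g.fE (r.incL.fE k)) := g.src _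
      have h2 : r.incL.fV (r.K.s k) = r.L.s (r.incL.fE k) := r.incL.src k
      have h3 : g.fV v = g.fV (r.incL.fV (r.K.s k)) := by rw [heq, h2, h1]
      exact hv _ (h.1.1 h3).symm
    · exact he ⟨e', fun k hk' => hk ⟨k, hk'⟩, rfl⟩
  · exact (h.2 e (fun e' he' => hc ⟨e', he'⟩) v hv).1 heq.symm

theorem kept_tgt {g : Morphism r.L G} (h : r.Applicable G g) {e : G.E}
    (he : e ∉ r.DelE G g) : G.t e ∉ r.DelV G g := by
  rintro ⟨v, hv, heq⟩
  by_cases hc : ∃ e', g.fE e' = e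
  · obtain ⟨e', rfl⟩ := hc
    by_cases hk : ∃ k, r.incL.fE k = e'
    · obtain ⟨k, rfl⟩ := hk
      have h1 : g.fV (r.L.t (r.incL.fE k)) = G.t (g.fE (r.incL.fE k)) := g.tgt _
      have h2 : r.incL.fV (r.K.t k) = r.L.t (r.incL.fE k) := r.incL.tgt k
      have h3 : g.fV v = g.fV (r.incL.fV (r.K.t k)) := by rw [heq, h2, h1]
      exact hv _ (h.1.1 h3).symm
    · exact he ⟨e', fun k hk' => hk ⟨k, hk'⟩, rfl⟩
  · exact (h.2 e (fun e' he' => hc ⟨e', he'⟩) v hv).2 heq.symm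

attribute [local instance] Classical.propDecidable

/-- The result graph of applying `r` to `G` via an applicable match `g`:
delete `g(L ∖ K)` (undefining labels/rootedness of images of interface nodes
where they are undefined in `K`), then add `R ∖ K` disjointly, relabelling
(and re-rooting) the images of interface nodes according to `R`. -/
noncomputable def result (g : Morphism r.L G) (h : r.Applicable G g) : RGraph LV LE where
  V := {x : G.V // x ∉ r.DelV G g} ⊕ {v : r.R.V // ∀ k, r.incR.fV k ≠ v}
  E := {x : G.E // x ∉ r.DelE G g} ⊕ {e : r.R.E // ∀ k, r.incR.fE k ≠ e}
  finV := by
    haveI := G.finV; haveI := r.R.finV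
    infer_instance
  finE := by
    haveI := G.finE; haveI := r.R.finE
    infer_instance
  s := fun e =>
    match e with
    | Sum.inl x => Sum.inl ⟨G.s x.1, r.kept_src G h x.2⟩
    | Sum.inr x =>
        if hk : ∃ k, r.incR.fV k = r.R.s x.1 then
          Sum.inl ⟨g.fV (r.incL.fV hk.choose), r.kept_incL G h.1 _⟩
        else Sum.inr ⟨r.R.s x.1, fun k hk' => hk ⟨k, hk'⟩⟩
  t := fun e =>
    match e with
    | Sum.inl x => Sum.inl ⟨G.t x.1, r.kept_tgt G h x.2⟩
    | Sum.inr x =>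
        if hk : ∃ k, r.incR.fV k = r.R.t x.1 then
          Sum.inl ⟨g.fV (r.incL.fV hk.choose), r.kept_incL G h.1 _⟩
        else Sum.inr ⟨r.R.t x.1, fun k hk' => hk ⟨k, hk'⟩⟩
  l := fun v =>
    match v with
    | Sum.inl x =>
        if hk : ∃ k : r.K.V, r.K.l k = none ∧ g.fV (r.incL.fV k) = x.1 then
          r.R.l (r.incR.fV hk.choose)
        else G.l x.1
    | Sum.inr v => r.R.l v.1
  m := fun e =>
    match e with
    | Sum.inl x => G.m x.1
    | Sum.inr x => r.R.m x.1
  p := fun v =>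
    match v with
    | Sum.inl x =>
        if hk : ∃ k : r.K.V, r.K.p k = none ∧ g.fV (r.incL.fV k) = x.1 then
          r.R.p (r.incR.fV hk.choose)
        else G.p x.1
    | Sum.inr v => r.R.p v.1

/-- Direct derivation `G ⇒_r M`: there is an applicable match `g` such that `M`
is isomorphic to the result of applying `r` to `G` via `g`. -/
def Deriv (r : Rule LV LE) (G M : RGraph LV LE) : Prop :=
  ∃ (g : Morphism r.L G) (h : r.Applicable G g), Nonempty (Iso (r.result G g h) M)

end Rule

/-- `G ⇒_𝓡 H` for a set of rules. -/
def GTStep {LV LE : Type} (Rs : Set (Rule LV LE)) (G H : RGraph LV LE) : Prop :=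
  ∃ r ∈ Rs, r.Deriv G H

/-- `G ⇒*_𝓡 H`: the reflexive-transitive closure of `⇒_𝓡`, up to isomorphism. -/
def GTDerivStar {LV LE : Type} (Rs : Set (Rule LV LE)) (G H : RGraph LV LE) : Prop :=
  Relation.ReflTransGen (GTStep Rs) G H ∨ Nonempty (Iso G H)
/-! ## The tree-recognition system -/

/-- node labels: `□` (square) and `△` (triangle) -/
inductive NodeLab : Type where
  | square : NodeLab
  | tri : NodeLab
deriving DecidableEq

/-- `L` of rule `r0`: `v1 --□--> v2`, both `□`-labelled, `v1` unrooted, `v2` rooted. -/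
abbrev L0 : RGraph NodeLab Unit where
  V := Fin 2
  E := Unit
  finV := inferInstance
  finE := inferInstance
  s := fun _ => 0
  t := fun _ => 1
  l := fun _ => some .square
  m := fun _ => ()
  p := ![some false, some true]

/-- `K` of rules `r0` and `r1`: the single node `v1`, unlabelled, rootedness undefined. -/
abbrev K0 : RGraph NodeLab Unit where
  V := Unit
  E := PEmpty
  finV := inferInstance
  finE := inferInstance
  s := PEmpty.elim
  t := PEmpty.elim
  l := fun _ => none
  m := PEmpty.elim
  p := fun _ => none

/-- `R` of rules `r0` and `r1`: the single node `v1`, labelled `□`, rooted. -/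
abbrev R0 : RGraph NodeLab Unit where
  V := Unit
  E := PEmpty
  finV := inferInstance
  finE := inferInstance
  s := PEmpty.elim
  t := PEmpty.elim
  l := fun _ => some .square
  m := PEmpty.elim
  p := fun _ => some true

def incL0 : Morphism K0 L0 where
  fV := fun _ => 0
  fE := PEmpty.elim
  src := fun e => e.elim
  tgt := fun e => e.elim
  edgeLabel := fun e => e.elim
  nodeLabel := fun _ _ h => nomatch h
  rootedness := fun _ _ h => nomatch h

def incR0 : Morphism K0 R0 where
  fV := id
  fE := PEmpty.elim
  src := fun e => e.elim
  tgt := fun e => e.elim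
  edgeLabel := fun e => e.elim
  nodeLabel := fun _ _ h => nomatch h
  rootedness := fun _ _ h => nomatch h

/-- rule `r0`: prune a rooted `□`-leaf with unrooted `□`-parent, root moves to the parent -/
def r0 : Rule NodeLab Unit where
  L := L0
  K := K0
  R := R0
  incL := incL0
  incR := incR0
  injL := ⟨Function.injective_of_subsingleton _, Function.injective_of_subsingleton _⟩
  injR := ⟨Function.injective_of_subsingleton _, Function.injective_of_subsingleton _⟩

/-- `L` of rule `r1`: like `L0` but `v1` is labelled `△`. -/
abbrev L1 : RGraph NodeLab Unit where
  V := Fin 2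
  E := Unit
  finV := inferInstance
  finE := inferInstance
  s := fun _ => 0
  t := fun _ => 1
  l := ![some .tri, some .square]
  m := fun _ => ()
  p := ![some false, some true]

def incL1 : Morphism K0 L1 where
  fV := fun _ => 0
  fE := PEmpty.elim
  src := fun e => e.elim
  tgt := fun e => e.elim
  edgeLabel := fun e => e.elim
  nodeLabel := fun _ _ h => nomatch h
  rootedness := fun _ _ h => nomatch h

/-- rule `r1`: prune a rooted `□`-leaf with unrooted `△`-parent, root moves to the
parent which becomes `□`-labelled -/
def r1 : Rule NodeLab Unit where
  L := L1
  K := K0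
  R := R0
  incL := incL1
  incR := incR0
  injL := ⟨Function.injective_of_subsingleton _, Function.injective_of_subsingleton _⟩
  injR := ⟨Function.injective_of_subsingleton _, Function.injective_of_subsingleton _⟩

/-- `L` of rule `r2`: `v1 --□--> v2`, both `□`-labelled, `v1` rooted, `v2` unrooted. -/
abbrev L2 : RGraph NodeLab Unit where
  V := Fin 2
  E := Unit
  finV := inferInstance
  finE := inferInstance
  s := fun _ => 0
  t := fun _ => 1
  l := fun _ => some .square
  m := fun _ => ()
  p := ![some true, some false]

/-- `K` of rule `r2`: nodes `v1, v2`, unlabelled, rootedness undefined, no edges. -/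
abbrev K2 : RGraph NodeLab Unit where
  V := Fin 2
  E := PEmpty
  finV := inferInstance
  finE := inferInstance
  s := PEmpty.elim
  t := PEmpty.elim
  l := fun _ => none
  m := PEmpty.elim
  p := fun _ => none

/-- `R` of rule `r2`: `v1 --□--> v2`, `v1` labelled `△` and unrooted, `v2` labelled `□`
and rooted. -/
abbrev R2 : RGraph NodeLab Unit where
  V := Fin 2
  E := Unit
  finV := inferInstance
  finE := inferInstance
  s := fun _ => 0
  t := fun _ => 1
  l := ![some .tri, some .square]
  m := fun _ => ()
  p := ![some false, some true]

def incL2 : Morphism K2 L2 where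
  fV := id
  fE := PEmpty.elim
  src := fun e => e.elim
  tgt := fun e => e.elim
  edgeLabel := fun e => e.elim
  nodeLabel := fun _ _ h => nomatch h
  rootedness := fun _ _ h => nomatch h

def incR2 : Morphism K2 R2 where
  fV := id
  fE := PEmpty.elim
  src := fun e => e.elim
  tgt := fun e => e.elim
  edgeLabel := fun e => e.elim
  nodeLabel := fun _ _ h => nomatch h
  rootedness := fun _ _ h => nomatch h

/-- rule `r2`: push the root one step down an edge, marking the old position `△` -/
def r2 : Rule NodeLab Unit where
  L := L2
  K := K2
  R := R2
  incL := incL2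
  incR := incR2
  injL := ⟨Function.injective_id, Function.injective_of_subsingleton _⟩
  injR := ⟨Function.injective_id, Function.injective_of_subsingleton _⟩

/-- the rule set of the tree-recognition system -/
def TreeRules : Set (Rule NodeLab Unit) := {r0, r1, r2}

/-! ## Trees -/

/-- `IsUndirWalk G v l w`: `l` is an undirected walk from `v` to `w` in `G`;
each step is an edge together with a boolean telling in which direction it is
traversed. -/
def IsUndirWalk {LV LE : Type} (G : RGraph LV LE) : G.V → List (G.E × Bool) → G.V → Prop
  | v, [], w => v = w
  | v, (e, true) :: rest, w => G.s e = v ∧ IsUndirWalk G (G.t e) rest w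
  | v, (e, false) :: rest, w => G.t e = v ∧ IsUndirWalk G (G.s e) rest w

/-- connectedness via undirected walks -/
def IsConnectedGraph {LV LE : Type} (G : RGraph LV LE) : Prop :=
  ∀ v w : G.V, ∃ l, IsUndirWalk G v l w

/-- an undirected cycle: a non-empty closed undirected walk without repeated edges -/
def HasUndirCycle {LV LE : Type} (G : RGraph LV LE) : Prop :=
  ∃ (v : G.V) (l : List (G.E × Bool)), l ≠ [] ∧ IsUndirWalk G v l v ∧ (l.map Prod.fst).Nodup

/-- a tree: non-empty, connected, no undirected cycles, and every node has at
most one incoming edge -/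
def IsTree {LV LE : Type} (G : RGraph LV LE) : Prop :=
  Nonempty G.V ∧ IsConnectedGraph G ∧ ¬ HasUndirCycle G ∧
    ∀ v : G.V, Nat.card {e : G.E // G.t e = v} ≤ 1

/-- an input graph: a TLRG with exactly one root node, all nodes labelled `□`
(all edges are `□`-labelled since `Unit` is the edge alphabet) -/
def IsInputGraph (G : RGraph NodeLab Unit) : Prop :=
  G.IsTLRG ∧ (∀ v, G.l v = some .square) ∧ G.rootCount = 1

/-- no rule of `Rs` is applicable to `H` -/
def InNormalForm {LV LE : Type} (Rs : Set (Rule LV LE)) (H : RGraph LV LE) : Prop :=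
  ¬ ∃ r ∈ Rs, ∃ g : Morphism r.L H, r.Applicable H g

/-! ## Auxiliary lemmas for the proof -/

lemma rootCount_iso {G H : RGraph NodeLab Unit} (i : Iso G H) : G.rootCount = H.rootCount :=
  Nat.card_congr
    ⟨fun v => ⟨i.toMor.fV v.1, i.toMor.rootedness _ _ v.2⟩,
     fun v => ⟨i.invMor.fV v.1, i.invMor.rootedness _ _ v.2⟩,
     fun v => Subtype.ext (i.leftV _), fun v => Subtype.ext (i.rightV _)⟩

lemma r0_rootCount (G : RGraph NodeLab Unit) (g : Morphism r0.L G) (h : r0.Applicable G g) :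
    (r0.result G g h).rootCount = G.rootCount := by
  classical
  have hinjV : Function.Injective g.fV := h.1.1
  have h0 : G.p (g.fV (0 : Fin 2)) = some false := g.rootedness (0 : Fin 2) false rfl
  have h1 : G.p (g.fV (1 : Fin 2)) = some true := g.rootedness (1 : Fin 2) true rfl
  have hne : g.fV (0 : Fin 2) ≠ g.fV (1 : Fin 2) := fun he => absurd (hinjV he) Fin.zero_ne_one
  have hdel : ∀ x : G.V, x ∈ r0.DelV G g ↔ g.fV (1 : Fin 2) = x := by
    intro x
    constructor
    · rintro ⟨v, hv, rfl⟩
      have hv1 : v = (1 : Fin 2) := Fin.eq_one_of_ne_zero v (fun hz => hv () hz.symm)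
      subst hv1; rfl
    · rintro rfl
      exact ⟨(1 : Fin 2), fun k hk => absurd hk Fin.zero_ne_one, rfl⟩
  have hdel0 : g.fV (0 : Fin 2) ∉ r0.DelV G g := fun hx => hne ((hdel _).1 hx).symm
  have hp : ∀ (x : G.V) (hx : x ∉ r0.DelV G g),
      (r0.result G g h).p (Sum.inl ⟨x, hx⟩) = if g.fV (0 : Fin 2) = x then some true else G.p x := by
    intro x hx
    have hrw : (r0.result G g h).p (Sum.inl ⟨x, hx⟩) =
        @dite _ (∃ k : K0.V, K0.p k = none ∧ g.fV (r0.incL.fV k) = x)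
          (Classical.propDecidable _)
          (fun hk => r0.R.p (r0.incR.fV hk.choose)) (fun _ => G.p x) := rfl
    rw [hrw]
    by_cases hc : g.fV (0 : Fin 2) = x
    · rw [dif_pos ⟨(), rfl, hc⟩, if_pos hc]
      rfl
    · rw [dif_neg, if_neg hc]
      rintro ⟨k, -, hk2⟩
      exact hc hk2
  symm
  refine Nat.card_congr (Equiv.ofBijective
    (fun v : {v : G.V // G.p v = some true} =>
      if hc : v.1 = g.fV (1 : Fin 2) then
        (⟨Sum.inl ⟨g.fV (0 : Fin 2), hdel0⟩, by rw [hp, if_pos rfl]⟩ :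
          {w : (r0.result G g h).V // (r0.result G g h).p w = some true})
      else
        ⟨Sum.inl ⟨v.1, fun hx => hc ((hdel _).1 hx).symm⟩, by
          have hvn : g.fV (0 : Fin 2) ≠ v.1 := fun he => by
            have hv := v.2; rw [← he, h0] at hv; simp at hv
          rw [hp, if_neg hvn]; exact v.2⟩) ⟨?_, ?_⟩)
  · intro a b hab
    dsimp only at hab
    by_cases hca : a.1 = g.fV (1 : Fin 2) <;> by_cases hcb : b.1 = g.fV (1 : Fin 2)
    · exact Subtype.ext (hca.trans hcb.symm)
    · rw [dif_pos hca, dif_neg hcb] at hab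
      have hv := Subtype.ext_iff.mp (Sum.inl_injective (Subtype.ext_iff.mp hab))
      have hb := b.2; rw [← hv, h0] at hb; simp at hb
    · rw [dif_neg hca, dif_pos hcb] at hab
      have hv := Subtype.ext_iff.mp (Sum.inl_injective (Subtype.ext_iff.mp hab))
      have ha := a.2; rw [hv, h0] at ha; simp at ha
    · rw [dif_neg hca, dif_neg hcb] at hab
      have hv := Subtype.ext_iff.mp (Sum.inl_injective (Subtype.ext_iff.mp hab))
      exact Subtype.ext hv
  · rintro ⟨(⟨x, hx⟩ | ⟨w, hw⟩), hv⟩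
    · rw [hp x hx] at hv
      by_cases hc : g.fV (0 : Fin 2) = x
      · refine ⟨⟨g.fV (1 : Fin 2), h1⟩, ?_⟩
        dsimp only
        rw [dif_pos rfl]
        exact Subtype.ext (congrArg Sum.inl (Subtype.ext hc))
      · rw [if_neg hc] at hv
        refine ⟨⟨x, hv⟩, ?_⟩
        dsimp only
        rw [dif_neg (fun he => hx ((hdel x).2 he.symm))]
    · exact absurd rfl (hw w)

lemma r1_rootCount (G : RGraph NodeLab Unit) (g : Morphism r1.L G) (h : r1.Applicable G g) :
    (r1.result G g h).rootCount = G.rootCount := by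
  classical
  have hinjV : Function.Injective g.fV := h.1.1
  have h0 : G.p (g.fV (0 : Fin 2)) = some false := g.rootedness (0 : Fin 2) false rfl
  have h1 : G.p (g.fV (1 : Fin 2)) = some true := g.rootedness (1 : Fin 2) true rfl
  have hne : g.fV (0 : Fin 2) ≠ g.fV (1 : Fin 2) := fun he => absurd (hinjV he) Fin.zero_ne_one
  have hdel : ∀ x : G.V, x ∈ r1.DelV G g ↔ g.fV (1 : Fin 2) = x := by
    intro x
    constructor
    · rintro ⟨v, hv, rfl⟩
      have hv1 : v = (1 : Fin 2) := Fin.eq_one_of_ne_zero v (fun hz => hv () hz.symm)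
      subst hv1; rfl
    · rintro rfl
      exact ⟨(1 : Fin 2), fun k hk => absurd hk Fin.zero_ne_one, rfl⟩
  have hdel0 : g.fV (0 : Fin 2) ∉ r1.DelV G g := fun hx => hne ((hdel _).1 hx).symm
  have hp : ∀ (x : G.V) (hx : x ∉ r1.DelV G g),
      (r1.result G g h).p (Sum.inl ⟨x, hx⟩) = if g.fV (0 : Fin 2) = x then some true else G.p x := by
    intro x hx
    have hrw : (r1.result G g h).p (Sum.inl ⟨x, hx⟩) =
        @dite _ (∃ k : K0.V, K0.p k = none ∧ g.fV (r1.incL.fV k) = x)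
          (Classical.propDecidable _)
          (fun hk => r1.R.p (r1.incR.fV hk.choose)) (fun _ => G.p x) := rfl
    rw [hrw]
    by_cases hc : g.fV (0 : Fin 2) = x
    · rw [dif_pos ⟨(), rfl, hc⟩, if_pos hc]
      rfl
    · rw [dif_neg, if_neg hc]
      rintro ⟨k, -, hk2⟩
      exact hc hk2
  symm
  refine Nat.card_congr (Equiv.ofBijective
    (fun v : {v : G.V // G.p v = some true} =>
      if hc : v.1 = g.fV (1 : Fin 2) then
        (⟨Sum.inl ⟨g.fV (0 : Fin 2), hdel0⟩, by rw [hp, if_pos rfl]⟩ :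
          {w : (r1.result G g h).V // (r1.result G g h).p w = some true})
      else
        ⟨Sum.inl ⟨v.1, fun hx => hc ((hdel _).1 hx).symm⟩, by
          have hvn : g.fV (0 : Fin 2) ≠ v.1 := fun he => by
            have hv := v.2; rw [← he, h0] at hv; simp at hv
          rw [hp, if_neg hvn]; exact v.2⟩) ⟨?_, ?_⟩)
  · intro a b hab
    dsimp only at hab
    by_cases hca : a.1 = g.fV (1 : Fin 2) <;> by_cases hcb : b.1 = g.fV (1 : Fin 2)
    · exact Subtype.ext (hca.trans hcb.symm)
    · rw [dif_pos hca, dif_neg hcb] at hab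
      have hv := Subtype.ext_iff.mp (Sum.inl_injective (Subtype.ext_iff.mp hab))
      have hb := b.2; rw [← hv, h0] at hb; simp at hb
    · rw [dif_neg hca, dif_pos hcb] at hab
      have hv := Subtype.ext_iff.mp (Sum.inl_injective (Subtype.ext_iff.mp hab))
      have ha := a.2; rw [hv, h0] at ha; simp at ha
    · rw [dif_neg hca, dif_neg hcb] at hab
      have hv := Subtype.ext_iff.mp (Sum.inl_injective (Subtype.ext_iff.mp hab))
      exact Subtype.ext hv
  · rintro ⟨(⟨x, hx⟩ | ⟨w, hw⟩), hv⟩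
    · rw [hp x hx] at hv
      by_cases hc : g.fV (0 : Fin 2) = x
      · refine ⟨⟨g.fV (1 : Fin 2), h1⟩, ?_⟩
        dsimp only
        rw [dif_pos rfl]
        exact Subtype.ext (congrArg Sum.inl (Subtype.ext hc))
      · rw [if_neg hc] at hv
        refine ⟨⟨x, hv⟩, ?_⟩
        dsimp only
        rw [dif_neg (fun he => hx ((hdel x).2 he.symm))]
    · exact absurd rfl (hw w)

lemma r2_rootCount (G : RGraph NodeLab Unit) (g : Morphism r2.L G) (h : r2.Applicable G g) :
    (r2.result G g h).rootCount = G.rootCount := by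
  classical
  have hinjV : Function.Injective g.fV := h.1.1
  have h0 : G.p (g.fV (0 : Fin 2)) = some true := g.rootedness (0 : Fin 2) true rfl
  have h1 : G.p (g.fV (1 : Fin 2)) = some false := g.rootedness (1 : Fin 2) false rfl
  have hne : g.fV (0 : Fin 2) ≠ g.fV (1 : Fin 2) := fun he => absurd (hinjV he) Fin.zero_ne_one
  have hdel : ∀ x : G.V, x ∉ r2.DelV G g := by
    rintro x ⟨v, hv, rfl⟩
    exact hv v rfl
  have hp : ∀ (x : G.V) (hx : x ∉ r2.DelV G g),
      (r2.result G g h).p (Sum.inl ⟨x, hx⟩) =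
        if g.fV (0 : Fin 2) = x then some false else if g.fV (1 : Fin 2) = x then some true else G.p x := by
    intro x hx
    have hrw : (r2.result G g h).p (Sum.inl ⟨x, hx⟩) =
        @dite _ (∃ k : K2.V, K2.p k = none ∧ g.fV (r2.incL.fV k) = x)
          (Classical.propDecidable _)
          (fun hk => r2.R.p (r2.incR.fV hk.choose)) (fun _ => G.p x) := rfl
    rw [hrw]
    by_cases hc0 : g.fV (0 : Fin 2) = x
    · have hk : ∃ k : K2.V, K2.p k = none ∧ g.fV (r2.incL.fV k) = x := ⟨(0 : Fin 2), rfl, hc0⟩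
      rw [dif_pos hk, if_pos hc0]
      have hch : hk.choose = (0 : Fin 2) := hinjV (hk.choose_spec.2.trans hc0.symm)
      rw [show (r2.incR.fV hk.choose) = (0 : Fin 2) from hch]
      rfl
    · by_cases hc1 : g.fV (1 : Fin 2) = x
      · have hk : ∃ k : K2.V, K2.p k = none ∧ g.fV (r2.incL.fV k) = x := ⟨(1 : Fin 2), rfl, hc1⟩
        rw [dif_pos hk, if_neg hc0, if_pos hc1]
        have hch : hk.choose = (1 : Fin 2) := hinjV (hk.choose_spec.2.trans hc1.symm)
        rw [show (r2.incR.fV hk.choose) = (1 : Fin 2) from hch]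
        rfl
      · rw [dif_neg, if_neg hc0, if_neg hc1]
        rintro ⟨k, -, hk2⟩
        rcases Fin.exists_fin_two.mpr (Or.inl rfl) with _
        by_cases hk0 : k = (0 : Fin 2)
        · subst hk0; exact hc0 hk2
        · have : k = (1 : Fin 2) := Fin.eq_one_of_ne_zero k hk0
          subst this; exact hc1 hk2
  symm
  refine Nat.card_congr (Equiv.ofBijective
    (fun v : {v : G.V // G.p v = some true} =>
      if hc : v.1 = g.fV (0 : Fin 2) then
        (⟨Sum.inl ⟨g.fV (1 : Fin 2), hdel _⟩, by
            rw [hp, if_neg (fun he => hne he), if_pos rfl]⟩ :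
          {w : (r2.result G g h).V // (r2.result G g h).p w = some true})
      else
        ⟨Sum.inl ⟨v.1, hdel _⟩, by
          have hv1 : g.fV (1 : Fin 2) ≠ v.1 := fun he => by
            have hv := v.2; rw [← he, h1] at hv; simp at hv
          rw [hp, if_neg (fun he => hc he.symm), if_neg hv1]; exact v.2⟩) ⟨?_, ?_⟩)
  · intro a b hab
    dsimp only at hab
    by_cases hca : a.1 = g.fV (0 : Fin 2) <;> by_cases hcb : b.1 = g.fV (0 : Fin 2)
    · exact Subtype.ext (hca.trans hcb.symm)
    · rw [dif_pos hca, dif_neg hcb] at hab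
      have hv := Subtype.ext_iff.mp (Sum.inl_injective (Subtype.ext_iff.mp hab))
      have hb := b.2; rw [← hv, h1] at hb; simp at hb
    · rw [dif_neg hca, dif_pos hcb] at hab
      have hv := Subtype.ext_iff.mp (Sum.inl_injective (Subtype.ext_iff.mp hab))
      have ha := a.2; rw [hv, h1] at ha; simp at ha
    · rw [dif_neg hca, dif_neg hcb] at hab
      have hv := Subtype.ext_iff.mp (Sum.inl_injective (Subtype.ext_iff.mp hab))
      exact Subtype.ext hv
  · rintro ⟨(⟨x, hx⟩ | ⟨w, hw⟩), hv⟩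
    · rw [hp x hx] at hv
      by_cases hc1 : g.fV (1 : Fin 2) = x
      · refine ⟨⟨g.fV (0 : Fin 2), h0⟩, ?_⟩
        dsimp only
        rw [dif_pos rfl]
        exact Subtype.ext (congrArg Sum.inl (Subtype.ext hc1))
      · by_cases hc0 : g.fV (0 : Fin 2) = x
        · rw [if_pos hc0] at hv; simp at hv
        · rw [if_neg hc0, if_neg hc1] at hv
          refine ⟨⟨x, hv⟩, ?_⟩
          dsimp only
          rw [dif_neg (fun he => hc0 he.symm)]
    · exact absurd rfl (hw w)

lemma step_rootCount {M H : RGraph NodeLab Unit} (hs : GTStep TreeRules M H) :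
    H.rootCount = M.rootCount := by
  obtain ⟨r, hr, hd⟩ := hs
  simp only [TreeRules, Set.mem_insert_iff, Set.mem_singleton_iff] at hr
  rcases hr with rfl | rfl | rfl <;>
    · obtain ⟨g, hap, ⟨i⟩⟩ := hd
      rw [← rootCount_iso i]
      first
        | exact r0_rootCount M g hap
        | exact r1_rootCount M g hap
        | exact r2_rootCount M g hap

/-- If `G` is an input graph and `G ⇒*_𝓡 H`, then `H` has exactly one root
node; in particular `H` is non-empty, so the empty graph is not derivable. -/
theorem one_root_nonempty (G H : RGraph NodeLab Unit)
    (hG : IsInputGraph G) (hd : GTDerivStar TreeRules G H) :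
    H.rootCount = 1 ∧ Nonempty H.V := by
  have hroot : H.rootCount = 1 := by
    rcases hd with hrt | hiso
    · induction hrt with
      | refl => exact hG.2.2
      | tail _ hbc ih => rw [step_rootCount hbc, ih]
    · obtain ⟨i⟩ := hiso
      rw [← rootCount_iso i]; exact hG.2.2
  refine ⟨hroot, ?_⟩
  by_contra hne
  haveI : IsEmpty H.V := not_nonempty_iff.mp hne
  haveI : IsEmpty {v : H.V // H.p v = some true} := ⟨fun v => IsEmpty.false v.1⟩
  rw [RGraph.rootCount, Nat.card_of_isEmpty] at hroot
  exact one_ne_zero hroot.symm
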